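/- Define the one-step controllable-to set E(S) = { x ∈ Δ_{2^n} : ∃ u ∈ Δ_{2^m}, M_F u x ∈ S } for S ⊆ Δ_{2^n}, and set W_0 = {x^d}, W_{k+1} = E(W_0 ∪ W_1 ∪ ⋯ ∪ W_k) for k ≥ 0. Then the BCN x(t+1) = M_F u(t) x(t) is state-feedback stabilizable to x^d if and only if x^d ∈ E({x^d}) and ⋃_{k≥0} W_k = Δ_{2^n} (equivalently W_{2^n} = Δ_{2^n}). -/
import Mathlib


open Matrix Kronecker

noncomputable section

/-- Row-major pairing `(i, j) ↦ N * i + j`, matching the standard Kronecker convention. -/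
def kronEquiv (M N : ℕ) : Fin M × Fin N ≃ Fin (M * N) := finProdFinEquiv

/-- Kronecker product of two (column) vectors. -/
def vecKron {M N : ℕ} (u : Fin M → ℝ) (x : Fin N → ℝ) : Fin (M * N) → ℝ :=
  fun k => u ((kronEquiv M N).symm k).1 * x ((kronEquiv M N).symm k).2

/-- `δ_N^i` (0-indexed): the `i`-th column of the identity matrix `I_N`. -/
def eVec (N : ℕ) (i : Fin N) : Fin N → ℝ := fun j => if j = i then 1 else 0

/-- The set `Δ_N` of columns of the identity matrix. -/
def deltaSet (N : ℕ) : Set (Fin N → ℝ) := {x | ∃ i, x = eVec N i}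

/-- A matrix is logical if every column is a standard basis vector. -/
def IsLogical {m n : ℕ} (L : Matrix (Fin m) (Fin n) ℝ) : Prop :=
  ∀ j, ∃ i, (fun k => L k j) = eVec m i

/-- The power-reducing matrix `PR_k = diag(δ_k^1, …, δ_k^k)`: column `j` is `δ_k^j ⊗ δ_k^j`. -/
def PRmat (k : ℕ) : Matrix (Fin (k * k)) (Fin k) ℝ :=
  Matrix.of fun i j => vecKron (eVec k j) (eVec k j) i

lemma stp_dim (n p : ℕ) : p * (Nat.lcm n p / p) = n * (Nat.lcm n p / n) := by
  rw [Nat.mul_div_cancel' (Nat.dvd_lcm_right n p), Nat.mul_div_cancel' (Nat.dvd_lcm_left n p)]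

/-- The semi-tensor product `A ⋉ B = (A ⊗ I_{t/n})(B ⊗ I_{t/p})`, `t = lcm(n,p)`. -/
def stp {m n p q : ℕ} (A : Matrix (Fin m) (Fin n) ℝ) (B : Matrix (Fin p) (Fin q) ℝ) :
    Matrix (Fin (m * (Nat.lcm n p / n))) (Fin (q * (Nat.lcm n p / p))) ℝ :=
  (Matrix.reindex (kronEquiv m _) (kronEquiv n _)
      (A ⊗ₖ (1 : Matrix (Fin (Nat.lcm n p / n)) (Fin (Nat.lcm n p / n)) ℝ))) *
  (Matrix.reindex ((kronEquiv p _).trans (finCongr (stp_dim n p))) (kronEquiv q _)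
      (B ⊗ₖ (1 : Matrix (Fin (Nat.lcm n p / p)) (Fin (Nat.lcm n p / p)) ℝ)))

lemma mulVec_eVec' {p q : ℕ} (A : Matrix (Fin p) (Fin q) ℝ) (j : Fin q) :
    A.mulVec (eVec q j) = fun k => A k j := by
  funext k
  simp [Matrix.mulVec, dotProduct, eVec, mul_ite, mul_one, mul_zero]

lemma vecKron_eVec' (M N : ℕ) (a : Fin M) (b : Fin N) :
    vecKron (eVec M a) (eVec N b) = eVec (M * N) (kronEquiv M N (a, b)) := by
  funext k
  simp only [vecKron, eVec]
  by_cases h : k = kronEquiv M N (a, b)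
  · subst h
    simp
  · rw [if_neg h]
    by_cases h1 : ((kronEquiv M N).symm k).1 = a
    · by_cases h2 : ((kronEquiv M N).symm k).2 = b
      · exfalso
        apply h
        have h3 : (kronEquiv M N).symm k = (a, b) := Prod.ext h1 h2
        rw [← h3, Equiv.apply_symm_apply]
      · simp [h2]
    · simp [h1]

/-- a BCN is state-feedback stabilizable to `x^d` iff
`x^d ∈ E({x^d})` and the iterated one-step controllable-to sets exhaust `Δ_{2^n}`. -/
theorem point_stabilization_criterion (m n : ℕ)
    (MF : Matrix (Fin (2 ^ n)) (Fin (2 ^ m * 2 ^ n)) ℝ) (hMF : IsLogical MF)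
    (xd : Fin (2 ^ n) → ℝ) (hxd : xd ∈ deltaSet (2 ^ n))
    (E : Set (Fin (2 ^ n) → ℝ) → Set (Fin (2 ^ n) → ℝ))
    (hE : ∀ S, E S = {x | x ∈ deltaSet (2 ^ n) ∧
      ∃ u ∈ deltaSet (2 ^ m), MF.mulVec (vecKron u x) ∈ S})
    (W : ℕ → Set (Fin (2 ^ n) → ℝ)) (hW0 : W 0 = {xd})
    (hWs : ∀ k, W (k + 1) = E (⋃ i ∈ Finset.range (k + 1), W i)) :
    (∃ MG : Matrix (Fin (2 ^ m)) (Fin (2 ^ n)) ℝ, IsLogical MG ∧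
        ∃ T : ℕ, ∀ x ∈ deltaSet (2 ^ n), ∀ t ≥ T,
          (fun y => MF.mulVec (vecKron (MG.mulVec y) y))^[t] x = xd) ↔
      (xd ∈ E {xd} ∧ (⋃ k, W k) = deltaSet (2 ^ n)) := by
  classical
  obtain ⟨i0, hi0⟩ := hxd
  choose fcol hfcol using hMF
  have hstepF : ∀ (a : Fin (2^m)) (i : Fin (2^n)),
      MF.mulVec (vecKron (eVec (2^m) a) (eVec (2^n) i))
        = eVec (2^n) (fcol (kronEquiv (2^m) (2^n) (a, i))) := by
    intro a i
    rw [vecKron_eVec', mulVec_eVec', hfcol]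
  have hWdelta : ∀ k, W k ⊆ deltaSet (2^n) := by
    intro k
    cases k with
    | zero =>
      rw [hW0]
      intro x hx
      rw [Set.mem_singleton_iff] at hx
      rw [hx]
      exact ⟨i0, hi0⟩
    | succ k =>
      rw [hWs k, hE]
      intro x hx
      exact hx.1
  constructor
  · rintro ⟨MG, hMG, T, hT⟩
    choose gcol hgcol using hMG
    have hstep : ∀ i : Fin (2^n),
        MF.mulVec (vecKron (MG.mulVec (eVec (2^n) i)) (eVec (2^n) i))
          = eVec (2^n) (fcol (kronEquiv (2^m) (2^n) (gcol i, i))) := by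
      intro i
      have h1 : MG.mulVec (eVec (2^n) i) = eVec (2^m) (gcol i) := by
        rw [mulVec_eVec', hgcol]
      rw [h1, hstepF]
    constructor
    · rw [hE]
      refine ⟨⟨i0, hi0⟩, MG.mulVec xd, ?_, ?_⟩
      · rw [hi0, mulVec_eVec', hgcol]
        exact ⟨gcol i0, rfl⟩
      · have h1 := hT xd ⟨i0, hi0⟩ T le_rfl
        have h2 := hT xd ⟨i0, hi0⟩ (T+1) (Nat.le_succ T)
        rw [Function.iterate_succ_apply', h1] at h2
        exact Set.mem_singleton_iff.mpr h2
    · apply Set.Subset.antisymm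
      · exact Set.iUnion_subset hWdelta
      · intro x hx
        have claim : ∀ t, ∀ x ∈ deltaSet (2^n),
            (fun y => MF.mulVec (vecKron (MG.mulVec y) y))^[t] x = xd →
            ∃ k ≤ t, x ∈ W k := by
          intro t
          induction t with
          | zero =>
            intro x _ h0
            refine ⟨0, le_rfl, ?_⟩
            rw [hW0]
            exact Set.mem_singleton_iff.mpr h0
          | succ t ih =>
            intro x hx ht
            obtain ⟨i, rfl⟩ := hx
            rw [Function.iterate_succ_apply] at ht
            have hnext : (fun y => MF.mulVec (vecKron (MG.mulVec y) y)) (eVec (2^n) i)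
                ∈ deltaSet (2^n) := by
              show MF.mulVec (vecKron (MG.mulVec (eVec (2^n) i)) (eVec (2^n) i)) ∈ _
              rw [hstep]
              exact ⟨_, rfl⟩
            obtain ⟨k, hk, hmem⟩ := ih _ hnext ht
            refine ⟨t+1, le_rfl, ?_⟩
            rw [hWs t, hE]
            refine ⟨⟨i, rfl⟩, MG.mulVec (eVec (2^n) i), ?_, ?_⟩
            · rw [mulVec_eVec', hgcol]
              exact ⟨gcol i, rfl⟩
            · exact Set.mem_iUnion₂.mpr ⟨k, Finset.mem_range.mpr (Nat.lt_succ_of_le hk), hmem⟩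
        obtain ⟨k, _, hmem⟩ := claim T x hx (hT x hx T le_rfl)
        exact Set.mem_iUnion.mpr ⟨k, hmem⟩
  · rintro ⟨hExd, hUnion⟩
    have hmemW : ∀ i : Fin (2^n), ∃ k, eVec (2^n) i ∈ W k := by
      intro i
      have h : eVec (2^n) i ∈ deltaSet (2^n) := ⟨i, rfl⟩
      rw [← hUnion] at h
      exact Set.mem_iUnion.mp h
    set rank : Fin (2^n) → ℕ := fun i => Nat.find (hmemW i) with hrankdef
    have hrank_mem : ∀ i, eVec (2^n) i ∈ W (rank i) := fun i => Nat.find_spec (hmemW i)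
    have hrank_le : ∀ (i : Fin (2^n)) (k : ℕ), eVec (2^n) i ∈ W k → rank i ≤ k := by
      intro i k h
      simp only [hrankdef]
      exact Nat.find_le h
    have hrank_xd : rank i0 = 0 := by
      have h : eVec (2^n) i0 ∈ W 0 := by
        rw [hW0]
        exact Set.mem_singleton_iff.mpr hi0.symm
      exact Nat.le_zero.mp (hrank_le i0 0 h)
    have hchoice : ∀ i : Fin (2^n), ∃ a : Fin (2^m),
        (eVec (2^n) i = xd ∧ eVec (2^n) (fcol (kronEquiv (2^m) (2^n) (a, i))) = xd) ∨
        (eVec (2^n) i ≠ xd ∧ rank (fcol (kronEquiv (2^m) (2^n) (a, i))) < rank i) := by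
      intro i
      by_cases hi : eVec (2^n) i = xd
      · rw [hE] at hExd
        obtain ⟨-, u, hu, hnext⟩ := hExd
        obtain ⟨a, rfl⟩ := hu
        refine ⟨a, Or.inl ⟨hi, ?_⟩⟩
        have hnext' : MF.mulVec (vecKron (eVec (2^m) a) (eVec (2^n) i)) = xd := by
          rw [hi]
          exact Set.mem_singleton_iff.mp hnext
        rw [hstepF] at hnext'
        exact hnext'
      · have hr0 : rank i ≠ 0 := by
          intro h
          have hm := hrank_mem i
          rw [h, hW0, Set.mem_singleton_iff] at hm
          exact hi hm
        obtain ⟨k, hk⟩ := Nat.exists_eq_succ_of_ne_zero hr0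
        have hmem : eVec (2^n) i ∈ W (k+1) := by
          have h2 := hrank_mem i
          rw [hk] at h2
          exact h2
        rw [hWs k, hE] at hmem
        obtain ⟨-, u, hu, hnext⟩ := hmem
        obtain ⟨a, rfl⟩ := hu
        rw [hstepF] at hnext
        obtain ⟨j, hj, hjmem⟩ := Set.mem_iUnion₂.mp hnext
        refine ⟨a, Or.inr ⟨hi, ?_⟩⟩
        calc rank (fcol (kronEquiv (2^m) (2^n) (a, i))) ≤ j :=
              hrank_le (fcol (kronEquiv (2^m) (2^n) (a, i))) j hjmem
          _ < k + 1 := Finset.mem_range.mp hj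
          _ = rank i := hk.symm
    choose g hg using hchoice
    set F : Fin (2^n) → Fin (2^n) := fun i => fcol (kronEquiv (2^m) (2^n) (g i, i)) with hF
    set MG : Matrix (Fin (2^m)) (Fin (2^n)) ℝ :=
      Matrix.of (fun k j => eVec (2^m) (g j) k) with hMGdef
    have hstepG : ∀ i : Fin (2^n),
        MF.mulVec (vecKron (MG.mulVec (eVec (2^n) i)) (eVec (2^n) i)) = eVec (2^n) (F i) := by
      intro i
      have h1 : MG.mulVec (eVec (2^n) i) = eVec (2^m) (g i) := by
        rw [mulVec_eVec']
        rfl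
      rw [h1, hstepF]
    have claim : ∀ t, ∀ i : Fin (2^n), rank i ≤ t →
        (fun y => MF.mulVec (vecKron (MG.mulVec y) y))^[t] (eVec (2^n) i) = xd := by
      intro t
      induction t with
      | zero =>
        intro i hi
        have h0 : rank i = 0 := Nat.le_zero.mp hi
        have hm := hrank_mem i
        rw [h0, hW0, Set.mem_singleton_iff] at hm
        simpa using hm
      | succ t ih =>
        intro i hi
        have hrw : (fun y => MF.mulVec (vecKron (MG.mulVec y) y))^[t+1] (eVec (2^n) i)
            = (fun y => MF.mulVec (vecKron (MG.mulVec y) y))^[t] (eVec (2^n) (F i)) := by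
          rw [Function.iterate_succ_apply]
          exact congrArg _ (hstepG i)
        rw [hrw]
        rcases hg i with ⟨_, hFnext⟩ | ⟨_, hlt⟩
        · rw [hFnext]
          have h0 : rank i0 ≤ t := by
            rw [hrank_xd]
            exact Nat.zero_le t
          have h1 := ih i0 h0
          rw [← hi0] at h1
          exact h1
        · exact ih (F i) (Nat.lt_succ_iff.mp (lt_of_lt_of_le hlt hi))
    refine ⟨MG, fun j => ⟨g j, rfl⟩, Finset.univ.sup rank, ?_⟩
    rintro x ⟨i, rfl⟩ t ht
    exact claim t i (le_trans (Finset.le_sup (Finset.mem_univ i)) ht)
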